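/- Let k ≥ 1 be an integer and 0 < s < 2. There is a constant C′_k, depending only on k, such that for every integer q ≥ 2 the following holds. Let Λ_{q,s} ⊂ ℝ² be the closed q^{−2/s}-neighborhood of the lattice points (1/q)ℤ² ∩ ([1/2,1]×[0,1]), let ψ(a,b) = (a cos(πb/2), a sin(πb/2)), and let E_{q,s} = ψ(Λ_{q,s} ∩ ([1/2,1]×[0,1])). Then the set of area types {(x^i·x^{j⊥})_{1≤i<j≤k+1} : x¹,…,x^{k+1} ∈ E_{q,s}} ⊂ ℝ^{k(k+1)/2} can be covered by at most C′_k q^{2k+1} Euclidean balls of radius C′_k q^{−2/s}. -/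

import Mathlib

open MeasureTheory Real
open scoped ENNReal

noncomputable section

/-- The plane `ℝ²` with the Euclidean norm. -/
abbrev Plane : Type := EuclideanSpace ℝ (Fin 2)

/-- The point `(a, b) ∈ ℝ²`. -/
def e2 (a b : ℝ) : Plane := (WithLp.equiv 2 (Fin 2 → ℝ)).symm ![a, b]

/-- The signed area `x · y^⊥`, where `y^⊥ = (−y₂, y₁)`. -/
def sarea (x y : Plane) : ℝ := x 0 * (-(y 1)) + x 1 * y 0

/-- The lattice points `(1/q)ℤ² ∩ ([1/2, 1] × [0, 1])`. -/
def latticePts (q : ℕ) : Set Plane :=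
  {p | ∃ a b : ℤ, p = e2 ((a : ℝ) / q) ((b : ℝ) / q) ∧
    1 / 2 ≤ (a : ℝ) / q ∧ (a : ℝ) / q ≤ 1 ∧ 0 ≤ (b : ℝ) / q ∧ (b : ℝ) / q ≤ 1}

/-- `Λ_{q,s}`: the closed `q^{−2/s}`-neighborhood of `(1/q)ℤ² ∩ ([1/2, 1] × [0, 1])`. -/
def Lambda (q : ℕ) (s : ℝ) : Set Plane :=
  Metric.cthickening ((q : ℝ) ^ (-2 / s)) (latticePts q)

/-- The polar-type map `ψ(a, b) = (a cos(πb/2), a sin(πb/2))`. -/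
def psiMap (v : Plane) : Plane :=
  e2 (v 0 * Real.cos (Real.pi * v 1 / 2)) (v 0 * Real.sin (Real.pi * v 1 / 2))

/-- The rectangle `Q = [1/2, 1] × [0, 1] ⊆ ℝ²`. -/
def Qrect : Set Plane := {v | 1 / 2 ≤ v 0 ∧ v 0 ≤ 1 ∧ 0 ≤ v 1 ∧ v 1 ≤ 1}

/-- `E_{q,s} = ψ(Λ_{q,s} ∩ ([1/2, 1] × [0, 1]))`. -/
def Eqs (q : ℕ) (s : ℝ) : Set Plane := psiMap '' (Lambda q s ∩ Qrect)

/-- The set of area types `(x^i·x^{j⊥})_{i<j}` of `(k+1)`-point configurations with all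
points in `S ⊆ ℝ²`, viewed in the Euclidean space `ℝ^{k(k+1)/2}` indexed by pairs
`i < j`. -/
def areaTypesE (k : ℕ) (S : Set Plane) :
    Set (EuclideanSpace ℝ {p : Fin (k + 1) × Fin (k + 1) // p.1 < p.2}) :=
  {v | ∃ x : Fin (k + 1) → Plane, (∀ i, x i ∈ S) ∧
    ∀ p, v p = sarea (x p.1.1) (x p.1.2)}

/-! ### Auxiliary lemmas -/

lemma e2_apply0 (a b : ℝ) : e2 a b 0 = a := rfl

lemma e2_apply1 (a b : ℝ) : e2 a b 1 = b := rfl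

lemma sarea_psi (u v : Plane) :
    sarea (psiMap u) (psiMap v)
      = u 0 * v 0 * Real.sin (π * u 1 / 2 - π * v 1 / 2) := by
  simp only [sarea, psiMap, e2_apply0, e2_apply1, Real.sin_sub]
  ring

lemma abs_sin_sub_sin_le (a b : ℝ) : |Real.sin a - Real.sin b| ≤ |a - b| := by
  rw [Real.sin_sub_sin, abs_mul, abs_mul, abs_two]
  calc 2 * |Real.sin ((a - b)/2)| * |Real.cos ((a + b)/2)|
      ≤ 2 * |(a - b)/2| * 1 := by
        apply mul_le_mul _ (Real.abs_cos_le_one _) (abs_nonneg _) (by positivity)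
        have := Real.abs_sin_le_abs (x := (a - b)/2)
        nlinarith [abs_nonneg ((a-b)/2)]
    _ = |a - b| := by rw [mul_one, abs_div, abs_two]; ring

lemma abs_sin_le_one' (x : ℝ) : |Real.sin x| ≤ 1 :=
  abs_le.2 ⟨Real.neg_one_le_sin x, Real.sin_le_one x⟩

/-- The main pointwise Lipschitz-type estimate. -/
lemma est {r r' ρ ρ' t t' τ τ' : ℝ} (hr' : |r'| ≤ 1) (hρ : |ρ| ≤ 1) (hρ' : |ρ'| ≤ 1) :
    |r * r' * Real.sin (π * t / 2 - π * t' / 2) - ρ * ρ' * Real.sin (π * τ / 2 - π * τ' / 2)|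
      ≤ |r - ρ| + |r' - ρ'| + 2 * |t - τ| + 2 * |t' - τ'| := by
  set S := Real.sin (π * t / 2 - π * t' / 2) with hS
  set S' := Real.sin (π * τ / 2 - π * τ' / 2) with hS'
  have hSle : |S| ≤ 1 := abs_sin_le_one' _
  have hSS' : |S - S'| ≤ 2 * |t - τ| + 2 * |t' - τ'| := by
    calc |S - S'| ≤ |(π * t / 2 - π * t' / 2) - (π * τ / 2 - π * τ' / 2)| :=
          _root_.abs_sin_sub_sin_le _ _
      _ = (π/2) * |(t - τ) - (t' - τ')| := by
          rw [show (π * t / 2 - π * t' / 2) - (π * τ / 2 - π * τ' / 2)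
              = (π/2) * ((t - τ) - (t' - τ')) by ring, abs_mul,
            abs_of_nonneg (by positivity : (0:ℝ) ≤ π/2)]
      _ ≤ 2 * (|t - τ| + |t' - τ'|) := by
          have h1 : |(t - τ) - (t' - τ')| ≤ |t - τ| + |t' - τ'| := abs_sub _ _
          have h2 : π / 2 ≤ 2 := by nlinarith [Real.pi_le_four]
          nlinarith [abs_nonneg ((t - τ) - (t' - τ')), abs_nonneg (t-τ), abs_nonneg (t'-τ')]
      _ = 2 * |t - τ| + 2 * |t' - τ'| := by ring
  have key : r * r' * S - ρ * ρ' * S'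
      = (r - ρ) * r' * S + ρ * (r' - ρ') * S + ρ * ρ' * (S - S') := by ring
  calc |r * r' * S - ρ * ρ' * S'|
      ≤ |(r - ρ) * r' * S| + |ρ * (r' - ρ') * S| + |ρ * ρ' * (S - S')| := by
        rw [key]; exact (abs_add_le _ _).trans (by gcongr; exact abs_add_le _ _)
    _ ≤ |r - ρ| * 1 * 1 + 1 * |r' - ρ'| * 1 + 1 * 1 * (2 * |t - τ| + 2 * |t' - τ'|) := by
        rw [abs_mul, abs_mul, abs_mul, abs_mul, abs_mul, abs_mul]
        gcongr <;> exact abs_nonneg _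
    _ ≤ _ := by nlinarith [abs_nonneg (r-ρ), abs_nonneg (r'-ρ')]

lemma comp_dist_le {ι : Type*} [Fintype ι] (x y : EuclideanSpace ℝ ι) (i : ι) :
    |x i - y i| ≤ dist x y := by
  rw [EuclideanSpace.dist_eq]
  rw [show |x i - y i| = Real.sqrt ((x i - y i)^2) from (Real.sqrt_sq_eq_abs _).symm]
  apply Real.sqrt_le_sqrt
  have h : dist (x i) (y i) ^ 2 = (x i - y i)^2 := by rw [Real.dist_eq, sq_abs]
  rw [← h]
  exact Finset.single_le_sum (f := fun j => dist (x j) (y j) ^ 2)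
    (fun j _ => by positivity) (Finset.mem_univ i)

lemma euclid_dist_le {ι : Type*} [Fintype ι] (x y : EuclideanSpace ℝ ι) (C : ℝ) (hC : 0 ≤ C)
    (h : ∀ i, |x i - y i| ≤ C) : dist x y ≤ Real.sqrt (Fintype.card ι) * C := by
  rw [EuclideanSpace.dist_eq]
  have hsum : ∑ i, dist (x i) (y i) ^ 2 ≤ (Fintype.card ι : ℝ) * C ^ 2 := by
    calc ∑ i, dist (x i) (y i) ^ 2 ≤ ∑ _i : ι, C ^ 2 := by
          apply Finset.sum_le_sum
          intro i _
          have := h i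
          rw [Real.dist_eq]
          nlinarith [abs_nonneg (x i - y i)]
      _ = (Fintype.card ι : ℝ) * C ^ 2 := by
          rw [Finset.sum_const, Finset.card_univ, nsmul_eq_mul]
  calc Real.sqrt (∑ i, dist (x i) (y i) ^ 2) ≤ Real.sqrt ((Fintype.card ι : ℝ) * C ^ 2) :=
        Real.sqrt_le_sqrt hsum
    _ = Real.sqrt (Fintype.card ι) * C := by
        rw [Real.sqrt_mul (by positivity), Real.sqrt_sq hC]

theorem statement19 (k : ℕ) (hk : 1 ≤ k) :
    ∃ C' : ℝ, 0 < C' ∧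
      ∀ s : ℝ, 0 < s → s < 2 → ∀ q : ℕ, 2 ≤ q →
        ∃ F : Finset (EuclideanSpace ℝ {p : Fin (k + 1) × Fin (k + 1) // p.1 < p.2}),
          (F.card : ℝ) ≤ C' * (q : ℝ) ^ (2 * k + 1) ∧
          areaTypesE k (Eqs q s) ⊆
            ⋃ z ∈ F, Metric.closedBall z (C' * (q : ℝ) ^ (-2 / s)) := by
  classical
  refine ⟨(3:ℝ)^(2*k+1) + 12*(k+1), by positivity, ?_⟩
  set C' : ℝ := (3:ℝ)^(2*k+1) + 12*(k+1) with hC'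
  intro s hs hs2 q hq
  have hq0 : (0:ℝ) < q := by positivity
  have hq0' : (0:ℝ) < (q:ℝ) := by exact_mod_cast (by omega : 0 < q)
  set δ : ℝ := (q:ℝ) ^ (-2/s) with hδ
  have hδpos : 0 < δ := Real.rpow_pos_of_pos hq0' _
  -- index sets
  set A : Finset (Fin (k+1) → ℤ) := Fintype.piFinset (fun _ => Finset.Icc (-(q:ℤ)) q) with hA
  set D : Finset (Fin (k+1) → ℤ) :=
    Fintype.piFinset (fun i => if i = 0 then ({0} : Finset ℤ) else Finset.Icc (-(q:ℤ)) q) with hD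
  set g : (Fin (k+1) → ℤ) × (Fin (k+1) → ℤ) →
      EuclideanSpace ℝ {p : Fin (k + 1) × Fin (k + 1) // p.1 < p.2} := fun ad =>
    WithLp.toLp 2 (fun (p : {p : Fin (k + 1) × Fin (k + 1) // p.1 < p.2}) => ((ad.1 p.1.1 : ℝ)/q) * ((ad.1 p.1.2 : ℝ)/q) *
      Real.sin (π * ((ad.2 p.1.1 - ad.2 p.1.2 : ℤ) : ℝ) / (2*q))) with hg
  refine ⟨(A ×ˢ D).image g, ?_, ?_⟩
  · -- cardinality bound
    have hIcc : (Finset.Icc (-(q:ℤ)) q).card = 2*q+1 := by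
      rw [Int.card_Icc]; omega
    have hAcard : A.card = (2*q+1)^(k+1) := by
      rw [hA, Fintype.card_piFinset]
      simp [hIcc]
    have hDcard : D.card = (2*q+1)^k := by
      rw [hD, Fintype.card_piFinset, Fin.prod_univ_succ]
      simp [Fin.succ_ne_zero, hIcc]
    have h1 : ((A ×ˢ D).image g).card ≤ (2*q+1)^(2*k+1) := by
      calc ((A ×ˢ D).image g).card ≤ (A ×ˢ D).card := Finset.card_image_le
        _ = A.card * D.card := Finset.card_product _ _
        _ = (2*q+1)^(2*k+1) := by rw [hAcard, hDcard, ← pow_add]; ring_nf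
    calc (((A ×ˢ D).image g).card : ℝ) ≤ ((2*q+1:ℕ):ℝ)^(2*k+1) := by exact_mod_cast h1
      _ ≤ (3*(q:ℝ))^(2*k+1) := by
          apply pow_le_pow_left₀ (by positivity)
          push_cast
          have : (1:ℝ) ≤ q := by exact_mod_cast (by omega : 1 ≤ q)
          linarith
      _ = (3:ℝ)^(2*k+1) * (q:ℝ)^(2*k+1) := by rw [mul_pow]
      _ ≤ C' * (q:ℝ)^(2*k+1) := by
          apply mul_le_mul_of_nonneg_right _ (by positivity)
          rw [hC']
          nlinarith [pow_pos (by norm_num : (0:ℝ) < 3) (2*k+1)]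
  · -- covering
    intro v hv
    obtain ⟨x, hxS, hvp⟩ := hv
    have h1 : ∀ i, ∃ u, u ∈ Lambda q s ∩ Qrect ∧ psiMap u = x i := fun i => hxS i
    choose u hu hux using h1
    have h2 : ∀ i, ∃ a b : ℤ, dist (u i) (e2 ((a:ℝ)/q) ((b:ℝ)/q)) < 2*δ ∧
        1 / 2 ≤ (a : ℝ) / q ∧ (a : ℝ) / q ≤ 1 ∧ 0 ≤ (b : ℝ) / q ∧ (b : ℝ) / q ≤ 1 := by
      intro i
      have hL : u i ∈ Metric.cthickening δ (latticePts q) := (hu i).1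
      have hthick : u i ∈ Metric.thickening (2*δ) (latticePts q) :=
        Metric.cthickening_subset_thickening' (by linarith) (by linarith) _ hL
      rw [Metric.mem_thickening_iff] at hthick
      obtain ⟨w, hw, hdist⟩ := hthick
      obtain ⟨a, b, hwe, hab⟩ := hw
      exact ⟨a, b, by rw [← hwe]; exact hdist, hab⟩
    choose a b hdist hbd using h2
    set d : Fin (k+1) → ℤ := fun i => b i - b 0 with hd
    -- integer bounds
    have haZ : ∀ i, a i ∈ Finset.Icc (-(q:ℤ)) q := by
      intro i
      obtain ⟨h1', h2', _, _⟩ := hbd i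
      rw [Finset.mem_Icc]
      constructor
      · have hh := (le_div_iff₀ hq0').mp h1'
        have : (0:ℝ) ≤ (a i : ℝ) := by linarith
        have h0 : (0:ℤ) ≤ a i := by exact_mod_cast this
        omega
      · have : (a i : ℝ) ≤ q := by
          rw [div_le_one hq0'] at h2'; exact h2'
        exact_mod_cast this
    have hbZ : ∀ i, 0 ≤ b i ∧ b i ≤ (q:ℤ) := by
      intro i
      obtain ⟨_, _, h3', h4'⟩ := hbd i
      constructor
      · have hh := (le_div_iff₀ hq0').mp h3'
        have : (0:ℝ) ≤ (b i : ℝ) := by linarith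
        exact_mod_cast this
      · have : (b i : ℝ) ≤ q := by rw [div_le_one hq0'] at h4'; exact h4'
        exact_mod_cast this
    have hmem : (a, d) ∈ A ×ˢ D := by
      rw [Finset.mem_product]
      constructor
      · rw [hA, Fintype.mem_piFinset]; exact haZ
      · rw [hD, Fintype.mem_piFinset]
        intro i
        by_cases hi : i = 0
        · simp [hi, hd]
        · simp only [hi, if_false, Finset.mem_Icc, hd]
          have := hbZ i; have := hbZ 0
          omega
    refine Set.mem_iUnion₂.2 ⟨g (a, d), Finset.mem_image.2 ⟨(a, d), hmem, rfl⟩, ?_⟩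
    rw [Metric.mem_closedBall]
    -- componentwise estimate
    have hcomp : ∀ p, |v p - g (a, d) p| ≤ 12 * δ := by
      intro p
      obtain ⟨⟨i, j⟩, hij⟩ := p
      have hvp' : v ⟨(i, j), hij⟩ = u i 0 * u j 0 * Real.sin (π * u i 1 / 2 - π * u j 1 / 2) := by
        rw [hvp ⟨(i, j), hij⟩, ← hux i, ← hux j, sarea_psi]
      have hzp : g (a, d) ⟨(i, j), hij⟩
          = ((a i : ℝ)/q) * ((a j : ℝ)/q) *
              Real.sin (π * ((b i : ℝ)/q) / 2 - π * ((b j : ℝ)/q) / 2) := by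
        rw [hg]
        simp only [hd, PiLp.toLp_apply]
        congr 1
        congr 1
        push_cast
        field_simp
        ring
      rw [hvp', hzp]
      -- bounds for est
      obtain ⟨hQ1, hQ2, hQ3, hQ4⟩ := (hu j).2
      obtain ⟨hl1, hl2, hl3, hl4⟩ := hbd i
      obtain ⟨hl1', hl2', hl3', hl4'⟩ := hbd j
      have h1' : |u j 0| ≤ 1 := abs_le.2 ⟨by linarith, hQ2⟩
      have h2' : |(a i : ℝ)/q| ≤ 1 := abs_le.2 ⟨by linarith, hl2⟩
      have h3' : |(a j : ℝ)/q| ≤ 1 := abs_le.2 ⟨by linarith, hl2'⟩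
      have key := est (t := u i 1) (t' := u j 1) (τ := (b i : ℝ)/q) (τ' := (b j : ℝ)/q)
        (r := u i 0) h1' h2' h3'
      -- componentwise distances to lattice points
      have d1 : |u i 0 - (a i : ℝ)/q| ≤ 2*δ := by
        have := comp_dist_le (u i) (e2 ((a i:ℝ)/q) ((b i:ℝ)/q)) 0
        rw [e2_apply0] at this
        exact this.trans (le_of_lt (hdist i))
      have d2 : |u j 0 - (a j : ℝ)/q| ≤ 2*δ := by
        have := comp_dist_le (u j) (e2 ((a j:ℝ)/q) ((b j:ℝ)/q)) 0
        rw [e2_apply0] at this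
        exact this.trans (le_of_lt (hdist j))
      have d3 : |u i 1 - (b i : ℝ)/q| ≤ 2*δ := by
        have := comp_dist_le (u i) (e2 ((a i:ℝ)/q) ((b i:ℝ)/q)) 1
        rw [e2_apply1] at this
        exact this.trans (le_of_lt (hdist i))
      have d4 : |u j 1 - (b j : ℝ)/q| ≤ 2*δ := by
        have := comp_dist_le (u j) (e2 ((a j:ℝ)/q) ((b j:ℝ)/q)) 1
        rw [e2_apply1] at this
        exact this.trans (le_of_lt (hdist j))
      calc |u i 0 * u j 0 * Real.sin (π * u i 1 / 2 - π * u j 1 / 2) -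
            (a i : ℝ)/q * ((a j : ℝ)/q) *
              Real.sin (π * ((b i : ℝ)/q) / 2 - π * ((b j : ℝ)/q) / 2)|
          ≤ |u i 0 - (a i : ℝ)/q| + |u j 0 - (a j : ℝ)/q| +
              2 * |u i 1 - (b i : ℝ)/q| + 2 * |u j 1 - (b j : ℝ)/q| := key
        _ ≤ 12 * δ := by linarith
    -- assemble
    have hdist' := euclid_dist_le v (g (a, d)) (12*δ) (by positivity) hcomp
    have hcard : Real.sqrt (Fintype.card {p : Fin (k + 1) × Fin (k + 1) // p.1 < p.2})
        ≤ (k+1 : ℝ) := by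
      have h1' := Fintype.card_subtype_le (α := Fin (k+1) × Fin (k+1)) (fun p => p.1 < p.2)
      have h2' : (Fintype.card {p : Fin (k + 1) × Fin (k + 1) // p.1 < p.2} : ℝ)
          ≤ ((k+1:ℝ))^2 := by
        have : Fintype.card (Fin (k+1) × Fin (k+1)) = (k+1)^2 := by
          simp [Fintype.card_prod, sq]
        rw [this] at h1'
        exact_mod_cast h1'
      calc Real.sqrt (Fintype.card {p : Fin (k + 1) × Fin (k + 1) // p.1 < p.2})
          ≤ Real.sqrt ((k+1:ℝ)^2) := Real.sqrt_le_sqrt h2'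
        _ = (k+1 : ℝ) := Real.sqrt_sq (by positivity)
    calc dist v (g (a, d))
        ≤ Real.sqrt (Fintype.card {p : Fin (k + 1) × Fin (k + 1) // p.1 < p.2}) * (12*δ) :=
          hdist'
      _ ≤ (k+1 : ℝ) * (12*δ) := by
          apply mul_le_mul_of_nonneg_right hcard (by positivity)
      _ ≤ C' * δ := by
          rw [hC']
          have : (0:ℝ) < (3:ℝ)^(2*k+1) := by positivity
          nlinarith
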